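/- arXiv:1912.08378 — 2 statements merged into one kernel-verified Lean document; each statement's English description precedes it below -/
import Mathlib

section
/- For all c, D > 0, all t ≥ 0 and all μ with 0 ≤ μ < c/(2D), the function H̃₁ satisfies 0 ≤ H̃₁(μ,t) ≤ 1. -/
open MeasureTheory Real Set

/-- `H̃₁(μ,t)` for the subcritical regime `0 ≤ μ < c/(2D)`. -/
noncomputable def Htilde1 (c D μ t : ℝ) : ℝ :=
  Real.exp (-(c ^ 2 * t) / (2 * D)) *
    (Real.cosh (c * t * Real.sqrt (c ^ 2 / (4 * D ^ 2) - μ ^ 2)) +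
      c / (2 * D * Real.sqrt (c ^ 2 / (4 * D ^ 2) - μ ^ 2)) *
        Real.sinh (c * t * Real.sqrt (c ^ 2 / (4 * D ^ 2) - μ ^ 2)))

/-- `H̃₂(μ,t)` for the supercritical regime `μ > c/(2D)`. -/
noncomputable def Htilde2 (c D μ t : ℝ) : ℝ :=
  Real.exp (-(c ^ 2 * t) / (2 * D)) *
    (Real.cos (c * t * Real.sqrt (μ ^ 2 - c ^ 2 / (4 * D ^ 2))) +
      c / (2 * D * Real.sqrt (μ ^ 2 - c ^ 2 / (4 * D ^ 2))) *
        Real.sin (c * t * Real.sqrt (μ ^ 2 - c ^ 2 / (4 * D ^ 2))))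

/-- `H̃(μ,t)`, pieced together from `H̃₁`, the value at `μ = c/(2D)`, and `H̃₂`. -/
noncomputable def Htilde (c D μ t : ℝ) : ℝ :=
  if μ < c / (2 * D) then Htilde1 c D μ t
  else if μ = c / (2 * D) then Real.exp (-(c ^ 2 * t) / (2 * D)) * (1 + c ^ 2 * t / (2 * D))
  else Htilde2 c D μ t

/-- For all `c, D > 0`, `t ≥ 0` and `0 ≤ μ < c/(2D)`,
one has `0 ≤ H̃₁(μ,t) ≤ 1`. -/
theorem Htilde1_mem_Icc :
    ∀ c D t μ : ℝ, 0 < c → 0 < D → 0 ≤ t → 0 ≤ μ → μ < c / (2 * D) →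
      0 ≤ Htilde1 c D μ t ∧ Htilde1 c D μ t ≤ 1 := by
  intro c D t μ hc hD ht hμ hμc
  set s : ℝ := Real.sqrt (c ^ 2 / (4 * D ^ 2) - μ ^ 2) with hs_def
  have hsub : 0 < c ^ 2 / (4 * D ^ 2) - μ ^ 2 := by
    have h1 : μ < c / (2 * D) := hμc
    have h2 : μ ^ 2 < (c / (2 * D)) ^ 2 := by
      apply pow_lt_pow_left₀ h1 hμ
      norm_num
    have h3 : (c / (2 * D)) ^ 2 = c ^ 2 / (4 * D ^ 2) := by ring
    linarith [h3 ▸ h2]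
  have hs : 0 < s := Real.sqrt_pos.mpr hsub
  have hsle : s ≤ c / (2 * D) := by
    have : s ≤ Real.sqrt (c ^ 2 / (4 * D ^ 2)) := by
      apply Real.sqrt_le_sqrt
      nlinarith [sq_nonneg μ]
    have heq : Real.sqrt (c ^ 2 / (4 * D ^ 2)) = c / (2 * D) := by
      rw [show c ^ 2 / (4 * D ^ 2) = (c / (2 * D)) ^ 2 by ring]
      exact Real.sqrt_sq (by positivity)
    linarith [heq ▸ this]
  set a : ℝ := c ^ 2 / (2 * D) with ha_def
  set b : ℝ := c * s with hb_def
  have hb : 0 < b := by positivity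
  have hba : b ≤ a := by
    have : c * s ≤ c * (c / (2 * D)) := by
      exact mul_le_mul_of_nonneg_left hsle hc.le
    have h2 : c * (c / (2 * D)) = a := by rw [ha_def]; ring
    linarith [h2 ▸ this]
  have hcoef : c / (2 * D * s) = a / b := by
    rw [ha_def, hb_def]
    field_simp
  have harg : c * t * s = b * t := by rw [hb_def]; ring
  have hexp : -(c ^ 2 * t) / (2 * D) = -(a * t) := by rw [ha_def]; ring
  have hbt : 0 ≤ b * t := by positivity
  have hsinh : 0 ≤ Real.sinh (b * t) := by rw [Real.sinh_eq]; have := Real.exp_le_exp.mpr (neg_le_self hbt); have := Real.exp_pos (-(b*t)); linarith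
  have hcosh : 0 < Real.cosh (b * t) := Real.cosh_pos _
  have hab : 0 ≤ a / b := by positivity
  unfold Htilde1
  rw [hcoef, harg, hexp]
  constructor
  · positivity
  · rw [show Real.exp (-(a * t)) = (Real.exp (a * t))⁻¹ by rw [← Real.exp_neg]]
    rw [inv_mul_le_iff₀ (Real.exp_pos _), mul_one]
    -- key inequality: cosh(bt) + (a/b) sinh(bt) ≤ exp(at)
    set E := Real.exp (b * t) with hE_def
    set F := Real.exp (-(b * t)) with hF_def
    set A := Real.exp (a * t) with hA_def
    have hEpos : 0 < E := Real.exp_pos _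
    have hEF : E - F ≤ 2 * (b * t) * E := by
      have h1 : F = E * Real.exp (-(2 * (b * t))) := by
        rw [hF_def, hE_def, ← Real.exp_add]; ring_nf
      have h2 : 1 + -(2 * (b * t)) ≤ Real.exp (-(2 * (b * t))) := by
        have := Real.add_one_le_exp (-(2 * (b * t))); linarith
      nlinarith [mul_le_mul_of_nonneg_left h2 hEpos.le]
    have hEA : E * (1 + (a - b) * t) ≤ A := by
      have h1 : A = E * Real.exp ((a - b) * t) := by
        rw [hA_def, hE_def, ← Real.exp_add]; ring_nf
      have h2 : 1 + (a - b) * t ≤ Real.exp ((a - b) * t) :=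
        by have := Real.add_one_le_exp ((a - b) * t); linarith
      nlinarith [mul_le_mul_of_nonneg_left h2 hEpos.le]
    have main : b * Real.cosh (b * t) + a * Real.sinh (b * t) ≤ b * A := by
      rw [Real.cosh_eq, Real.sinh_eq]
      nlinarith [mul_le_mul_of_nonneg_left hEF (sub_nonneg.mpr hba),
        mul_le_mul_of_nonneg_left hEA hb.le]
    have hrw : Real.cosh (b * t) + a / b * Real.sinh (b * t)
        = (b * Real.cosh (b * t) + a * Real.sinh (b * t)) / b := by
      field_simp
    rw [hrw, div_le_iff₀ hb]
    linarith [main]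
end

section
/- Let c, D > 0 and let G be a finite Borel measure on [0,∞) such that Σ_{l=0}^∞ (2l+1)·C_l < ∞. Then for all t, t' ≥ 0, Σ_{l=0}^∞ (2l+1)·|C_l(t,t')| ≤ Σ_{l=0}^∞ (2l+1)·C_l; in particular the series Σ_{l=0}^∞ (2l+1)·C_l(t,t') converges absolutely. -/
open MeasureTheory Real Set

/-- Bessel function of the first kind of real order `ν`, via its power series
(with real powers; for `ν > 0` this gives `besselJ ν 0 = 0`). -/
noncomputable def besselJ (ν x : ℝ) : ℝ :=
  ∑' n : ℕ, ((-1 : ℝ) ^ n / (n.factorial * Real.Gamma ((n : ℝ) + ν + 1))) *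
    (x / 2) ^ (2 * (n : ℝ) + ν)

/-- The integrand `J_{l+1/2}(μ)² / μ`, with its value at `μ = 0` defined by
continuous extension (`2/π` for `l = 0`, `0` for `l ≥ 1`). -/
noncomputable def besselInt (l : ℕ) (μ : ℝ) : ℝ :=
  if μ = 0 then (if l = 0 then 2 / Real.pi else 0)
  else besselJ ((l : ℝ) + 1 / 2) μ ^ 2 / μ

/-- Angular power spectrum `C_l(t,t')` of the spherical hyperbolic diffusion field. -/
noncomputable def Cl (c D : ℝ) (G : MeasureTheory.Measure ℝ) (l : ℕ) (t t' : ℝ) : ℝ :=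
  2 * Real.pi ^ 2 * ∫ μ in Set.Ici (0 : ℝ), besselInt l μ * Htilde c D μ t * Htilde c D μ t' ∂G

section aux

lemma sinh_le_mul_cosh {x : ℝ} (hx : 0 ≤ x) : Real.sinh x ≤ x * Real.cosh x := by
  rw [Real.sinh_eq_tsum, Real.cosh_eq_tsum, ← tsum_mul_left]
  apply Summable.tsum_le_tsum
  · intro n
    rw [mul_div_assoc', ← pow_succ']
    apply div_le_div_of_nonneg_left (by positivity) (by positivity)
    exact_mod_cast Nat.factorial_le (Nat.le_succ _)
  · exact (Real.hasSum_sinh x).summable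
  · exact ((Real.hasSum_cosh x).mul_left x).summable

lemma mul_sinh_le {l y : ℝ} (hl : 1 ≤ l) (hy : 0 ≤ y) : l * Real.sinh y ≤ Real.sinh (l * y) := by
  have h1 : l * y = y + (l - 1) * y := by ring
  rw [h1, Real.sinh_add]
  have h2 : Real.sinh y * 1 ≤ Real.sinh y * Real.cosh ((l-1)*y) := by
    apply mul_le_mul_of_nonneg_left (Real.one_le_cosh _) (by simp [Real.sinh_nonneg_iff, hy])
  have h3 : (l - 1) * Real.sinh y ≤ Real.cosh y * Real.sinh ((l-1)*y) := by
    calc (l - 1) * Real.sinh y ≤ (l - 1) * (y * Real.cosh y) := by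
          apply mul_le_mul_of_nonneg_left (sinh_le_mul_cosh hy) (by linarith)
      _ = Real.cosh y * ((l-1) * y) := by ring
      _ ≤ Real.cosh y * Real.sinh ((l-1)*y) := by
          apply mul_le_mul_of_nonneg_left _ (Real.cosh_pos _).le
          exact (Real.self_le_sinh_iff).2 (by nlinarith)
  nlinarith

lemma cosh_aux {l y : ℝ} (hl : 1 ≤ l) (hy : 0 ≤ y) :
    Real.cosh y + l * Real.sinh y ≤ Real.exp (l * y) := by
  rw [← Real.cosh_add_sinh]
  have : Real.cosh y ≤ Real.cosh (l * y) := by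
    rw [Real.cosh_le_cosh, abs_of_nonneg hy, abs_of_nonneg (by nlinarith)]
    nlinarith
  linarith [mul_sinh_le hl hy]

lemma abs_sin_le_self {x : ℝ} (hx : 0 ≤ x) : |Real.sin x| ≤ x := by
  rw [abs_le]
  refine ⟨?_, Real.sin_le hx⟩
  rcases le_total x π with h | h
  · linarith [Real.sin_nonneg_of_nonneg_of_le_pi hx h]
  · linarith [Real.neg_one_le_sin x, Real.pi_gt_three]

lemma Htilde_zero (c D μ : ℝ) : Htilde c D μ 0 = 1 := by
  unfold Htilde Htilde1 Htilde2
  split_ifs <;> simp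

lemma abs_Htilde_le_one {c D t : ℝ} (hc : 0 < c) (hD : 0 < D) (ht : 0 ≤ t) (μ : ℝ) :
    |Htilde c D μ t| ≤ 1 := by
  have ha : 0 ≤ c ^ 2 * t / (2 * D) := by positivity
  have hexp : Real.exp (-(c ^ 2 * t) / (2 * D)) = Real.exp (-(c ^ 2 * t / (2 * D))) := by
    ring_nf
  unfold Htilde
  split_ifs with h1 h2
  · -- subcritical
    unfold Htilde1
    set A := c ^ 2 / (4 * D ^ 2) - μ ^ 2 with hA
    rcases le_or_gt A 0 with hA0 | hA0
    · rw [Real.sqrt_eq_zero_of_nonpos hA0]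
      simp only [mul_zero, Real.cosh_zero, Real.sinh_zero, add_zero]
      rw [hexp, mul_one, abs_of_nonneg (Real.exp_nonneg _)]
      exact Real.exp_le_one_iff.2 (by linarith)
    · set s := Real.sqrt A with hs
      have hs0 : 0 < s := Real.sqrt_pos.2 hA0
      have hsle : s ≤ c / (2 * D) := by
        rw [hs]
        have hsq : (c / (2*D))^2 = c^2/(4*D^2) := by ring
        have : A ≤ (c / (2 * D)) ^ 2 := by rw [hA, hsq]; nlinarith [sq_nonneg μ]
        calc Real.sqrt A ≤ Real.sqrt ((c / (2*D))^2) := Real.sqrt_le_sqrt this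
          _ = c / (2 * D) := Real.sqrt_sq (by positivity)
      set l := c / (2 * D * s) with hl
      have hl1 : 1 ≤ l := by
        rw [hl, le_div_iff₀ (by positivity)]
        calc 1 * (2 * D * s) = 2 * D * s := by ring
          _ ≤ 2 * D * (c / (2*D)) := by nlinarith
          _ = c := by field_simp
      have hy : 0 ≤ c * t * s := by positivity
      have hly : l * (c * t * s) = c ^ 2 * t / (2 * D) := by
        rw [hl]; field_simp
      have hH : 0 ≤ Real.cosh (c*t*s) + l * Real.sinh (c*t*s) := by
        have := Real.cosh_pos (c*t*s)
        have : 0 ≤ Real.sinh (c*t*s) := by simp [Real.sinh_nonneg_iff, hy]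
        nlinarith
      rw [abs_of_nonneg (by positivity : (0:ℝ) ≤ Real.exp (-(c ^ 2 * t) / (2 * D)) * (Real.cosh (c*t*s) + l * Real.sinh (c*t*s)))]
      calc Real.exp (-(c ^ 2 * t) / (2 * D)) * (Real.cosh (c*t*s) + l * Real.sinh (c*t*s))
          ≤ Real.exp (-(c ^ 2 * t) / (2 * D)) * Real.exp (l * (c*t*s)) := by
            apply mul_le_mul_of_nonneg_left (cosh_aux hl1 hy) (Real.exp_nonneg _)
        _ = 1 := by rw [hly, ← Real.exp_add]; ring_nf; exact Real.exp_zero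
  · -- critical
    rw [hexp, abs_of_nonneg (by positivity)]
    calc Real.exp (-(c ^ 2 * t / (2 * D))) * (1 + c ^ 2 * t / (2 * D))
        ≤ Real.exp (-(c ^ 2 * t / (2 * D))) * Real.exp (c ^ 2 * t / (2 * D)) := by
          apply mul_le_mul_of_nonneg_left _ (Real.exp_nonneg _)
          linarith [Real.add_one_le_exp (c ^ 2 * t / (2 * D))]
      _ = 1 := by rw [← Real.exp_add]; ring_nf; exact Real.exp_zero
  · -- supercritical
    unfold Htilde2
    push_neg at h1
    have hμ : c / (2 * D) < μ := lt_of_le_of_ne h1 (Ne.symm h2)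
    have hμ0 : 0 < μ := lt_trans (by positivity) hμ
    have hA0 : 0 < μ ^ 2 - c ^ 2 / (4 * D ^ 2) := by
      have hck : (0:ℝ) < c/(2*D) := by positivity
      have hsq : (c / (2*D))^2 = c^2/(4*D^2) := by ring
      nlinarith [hμ, hck]
    set s := Real.sqrt (μ ^ 2 - c ^ 2 / (4 * D ^ 2)) with hs
    have hs0 : 0 < s := Real.sqrt_pos.2 hA0
    set l := c / (2 * D * s) with hl
    have hl0 : 0 < l := by positivity
    have hy : 0 ≤ c * t * s := by positivity
    have hly : l * (c * t * s) = c ^ 2 * t / (2 * D) := by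
      rw [hl]; field_simp
    rw [abs_mul, abs_of_nonneg (Real.exp_nonneg _)]
    calc Real.exp (-(c ^ 2 * t) / (2 * D)) * |Real.cos (c*t*s) + l * Real.sin (c*t*s)|
        ≤ Real.exp (-(c ^ 2 * t) / (2 * D)) * Real.exp (l * (c*t*s)) := by
          apply mul_le_mul_of_nonneg_left _ (Real.exp_nonneg _)
          calc |Real.cos (c*t*s) + l * Real.sin (c*t*s)|
              ≤ |Real.cos (c*t*s)| + |l * Real.sin (c*t*s)| := abs_add_le _ _
            _ ≤ 1 + l * (c*t*s) := by
                have := Real.abs_cos_le_one (c*t*s)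
                have h4 : |l * Real.sin (c*t*s)| = l * |Real.sin (c*t*s)| := by
                  rw [abs_mul, abs_of_pos hl0]
                have := abs_sin_le_self hy
                nlinarith [abs_nonneg (Real.sin (c*t*s))]
            _ ≤ Real.exp (l * (c*t*s)) := by linarith [Real.add_one_le_exp (l * (c*t*s))]
      _ = 1 := by rw [hly, ← Real.exp_add]; ring_nf; exact Real.exp_zero

noncomputable def bc (ν : ℝ) (n : ℕ) : ℝ := 1 / (n.factorial * Real.Gamma ((n : ℝ) + ν + 1))

lemma gamma_arg_pos {ν : ℝ} (hν : -1 < ν) (n : ℕ) : 0 < (n : ℝ) + ν + 1 := by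
  have h : (0:ℝ) ≤ (n:ℝ) := Nat.cast_nonneg n
  linarith

lemma gamma_pos {ν : ℝ} (hν : -1 < ν) (n : ℕ) : 0 < Real.Gamma ((n : ℝ) + ν + 1) :=
  Real.Gamma_pos_of_pos (gamma_arg_pos hν n)

lemma bc_pos {ν : ℝ} (hν : -1 < ν) (n : ℕ) : 0 < bc ν n := by
  have h1 := gamma_pos hν n
  have h2 : (0:ℝ) < n.factorial := by positivity
  unfold bc; positivity

lemma gamma_ratio {ν : ℝ} (hν : -(1:ℝ)/2 ≤ ν) :
    ∀ n : ℕ, Real.Gamma (ν + 1) ≤ 2 ^ n * Real.Gamma ((n : ℝ) + ν + 1) := by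
  have hν1 : -1 < ν := by linarith
  intro n
  induction n with
  | zero => simp
  | succ n ih =>
    have harg : ((n+1 : ℕ) : ℝ) + ν + 1 = ((n : ℝ) + ν + 1) + 1 := by push_cast; ring
    rw [harg, Real.Gamma_add_one (ne_of_gt (gamma_arg_pos hν1 n))]
    have hn : (0:ℝ) ≤ (n:ℝ) := Nat.cast_nonneg n
    have h2 : (1:ℝ)/2 ≤ (n : ℝ) + ν + 1 := by linarith
    have hg := gamma_pos hν1 n
    calc Real.Gamma (ν + 1) ≤ 2 ^ n * Real.Gamma ((n : ℝ) + ν + 1) := ih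
      _ = 2 ^ n * (1 * Real.Gamma ((n : ℝ) + ν + 1)) := by ring
      _ ≤ 2 ^ n * ((2 * ((n : ℝ) + ν + 1)) * Real.Gamma ((n : ℝ) + ν + 1)) := by
          apply mul_le_mul_of_nonneg_left _ (by positivity)
          exact mul_le_mul_of_nonneg_right (by linarith) hg.le
      _ = 2 ^ (n+1) * (((n : ℝ) + ν + 1) * Real.Gamma ((n : ℝ) + ν + 1)) := by ring

lemma bc_le {ν : ℝ} (hν : -(1:ℝ)/2 ≤ ν) (n : ℕ) :
    bc ν n ≤ 2 ^ n / (n.factorial * Real.Gamma (ν + 1)) := by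
  have hν1 : -1 < ν := by linarith
  have hg := gamma_pos hν1 n
  have hg1 : 0 < Real.Gamma (ν + 1) := Real.Gamma_pos_of_pos (by linarith)
  have hf : (0:ℝ) < n.factorial := by positivity
  rw [bc, div_le_div_iff₀ (by positivity) (by positivity)]
  calc 1 * (n.factorial * Real.Gamma (ν+1)) = n.factorial * Real.Gamma (ν+1) := by ring
    _ ≤ n.factorial * (2^n * Real.Gamma ((n:ℝ) + ν + 1)) :=
        mul_le_mul_of_nonneg_left (gamma_ratio hν n) hf.le
    _ = 2 ^ n * (n.factorial * Real.Gamma ((n:ℝ)+ν+1)) := by ring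

lemma bc_term_le {ν : ℝ} (hν : -(1:ℝ)/2 ≤ ν) (y : ℝ) (n : ℕ) :
    |bc ν n * y ^ n| ≤ (2 * |y|) ^ n / n.factorial / Real.Gamma (ν+1) := by
  have hν1 : -1 < ν := by linarith
  have hg1 : 0 < Real.Gamma (ν + 1) := Real.Gamma_pos_of_pos (by linarith)
  have hf : (0:ℝ) < n.factorial := by positivity
  rw [abs_mul, abs_of_pos (bc_pos hν1 n), abs_pow]
  calc bc ν n * |y| ^ n ≤ (2 ^ n / (n.factorial * Real.Gamma (ν + 1))) * |y| ^ n :=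
        mul_le_mul_of_nonneg_right (bc_le hν n) (by positivity)
    _ = (2 * |y|) ^ n / n.factorial / Real.Gamma (ν+1) := by
        rw [mul_pow, div_div]; ring

lemma summable_bc_abs {ν : ℝ} (hν : -(1:ℝ)/2 ≤ ν) (y : ℝ) :
    Summable fun n : ℕ => |bc ν n * y ^ n| :=
  Summable.of_nonneg_of_le (fun _ => abs_nonneg _) (bc_term_le hν y)
    ((Real.summable_pow_div_factorial (2 * |y|)).div_const (Real.Gamma (ν+1)))

lemma summable_bc {ν : ℝ} (hν : -(1:ℝ)/2 ≤ ν) (y : ℝ) :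
    Summable fun n : ℕ => bc ν n * y ^ n := by
  apply Summable.of_norm
  simpa only [Real.norm_eq_abs] using summable_bc_abs hν y

lemma besselJ_term_eq {ν x : ℝ} (hx : 0 < x) (n : ℕ) :
    ((-1 : ℝ) ^ n / (n.factorial * Real.Gamma ((n : ℝ) + ν + 1))) * (x / 2) ^ (2 * (n : ℝ) + ν)
      = (x / 2) ^ ν * (bc ν n * (-(x/2)^2) ^ n) := by
  have hx2 : (0:ℝ) < x / 2 := by linarith
  have h1 : (x / 2) ^ (2 * (n : ℝ) + ν) = (x/2) ^ (2 * (n:ℝ)) * (x/2) ^ ν :=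
    Real.rpow_add hx2 _ _
  have h2 : (x/2) ^ (2 * (n:ℝ)) = ((x/2)^2) ^ n := by
    have h3 : (2 * (n:ℝ)) = ((2 * n : ℕ) : ℝ) := by push_cast; ring
    rw [h3, Real.rpow_natCast, pow_mul]
  rw [h1, h2, bc, neg_pow ((x/2)^2) n]
  ring

lemma besselJ_eq {ν x : ℝ} (hx : 0 < x) :
    besselJ ν x = (x / 2) ^ ν * ∑' n : ℕ, bc ν n * (-(x/2)^2) ^ n := by
  rw [besselJ, ← tsum_mul_left]
  exact tsum_congr fun n => besselJ_term_eq hx n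

lemma S_rec {ν : ℝ} (hν : (1:ℝ)/2 ≤ ν) (y : ℝ) :
    (∑' n : ℕ, bc (ν-1) n * y ^ n)
      = ν * (∑' n : ℕ, bc ν n * y ^ n) + y * ∑' n : ℕ, bc (ν+1) n * y ^ n := by
  have hν0 : (0:ℝ) < ν := by linarith
  have hg : ∀ n : ℕ, 0 < Real.Gamma ((n:ℝ) + ν + 1) := gamma_pos (by linarith)
  set w : ℕ → ℝ := fun n => if n = 0 then 0 else bc (ν+1) (n-1) * y ^ n with hw
  have hw1 : ∀ n : ℕ, w (n+1) = bc (ν+1) n * y ^ (n+1) := by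
    intro n; simp [hw]
  have hsw1 : Summable fun n => w (n+1) := by
    apply Summable.congr ((summable_bc (by linarith : -(1:ℝ)/2 ≤ ν+1) y).mul_right y)
    intro n; rw [hw1 n, pow_succ]; ring
  have hsw : Summable w := (summable_nat_add_iff 1).1 hsw1
  have key : ∀ n : ℕ, bc (ν-1) n * y ^ n = ν * (bc ν n * y ^ n) + w n := by
    intro n
    match n with
    | 0 =>
      simp only [hw, if_pos rfl, pow_zero, mul_one, add_zero]
      have h0 : ((0:ℕ):ℝ) + (ν-1) + 1 = ν := by push_cast; ring
      have h1 : ((0:ℕ):ℝ) + ν + 1 = ν + 1 := by push_cast; ring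
      rw [bc, bc, h0, h1, Real.Gamma_add_one hν0.ne']
      have hgν : 0 < Real.Gamma ν := Real.Gamma_pos_of_pos hν0
      field_simp
    | (m+1) =>
      rw [hw1 m]
      have e1 : ((m+1:ℕ):ℝ) + (ν-1) + 1 = (m:ℝ) + ν + 1 := by push_cast; ring
      have e2 : ((m+1:ℕ):ℝ) + ν + 1 = ((m:ℝ) + ν + 1) + 1 := by push_cast; ring
      have e3 : ((m:ℕ):ℝ) + (ν+1) + 1 = ((m:ℝ) + ν + 1) + 1 := by push_cast; ring
      rw [bc, bc, bc, e1, e2, e3, Real.Gamma_add_one (ne_of_gt (gamma_arg_pos (by linarith) m))]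
      have hgm : 0 < Real.Gamma ((m:ℝ) + ν + 1) := hg m
      have hfm : (0:ℝ) < m.factorial := by positivity
      have hfm1 : ((m+1:ℕ).factorial : ℝ) = ((m+1:ℕ) : ℝ) * m.factorial := by
        rw [Nat.factorial_succ]; push_cast; ring
      have harg : (0:ℝ) < (m:ℝ) + ν + 1 := gamma_arg_pos (by linarith) m
      have hm1 : (0:ℝ) < ((m+1:ℕ):ℝ) := by positivity
      rw [hfm1, pow_succ]
      field_simp
      push_cast
      ring
  rw [tsum_congr key, Summable.tsum_add ((summable_bc (by linarith) y).mul_left ν) hsw,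
    tsum_mul_left, Summable.tsum_eq_zero_add hsw]
  simp only [hw, if_pos rfl, zero_add]
  congr 1
  calc ∑' n : ℕ, w (n+1) = ∑' n : ℕ, y * (bc (ν+1) n * y ^ n) := by
        apply tsum_congr; intro n; rw [hw1 n, pow_succ]; ring
    _ = y * ∑' n : ℕ, bc (ν+1) n * y ^ n := tsum_mul_left

lemma besselJ_rec {ν x : ℝ} (hν : (1:ℝ)/2 ≤ ν) (hx : 0 < x) :
    besselJ (ν+1) x = 2*ν/x * besselJ ν x - besselJ (ν-1) x := by
  have hx2 : (0:ℝ) < x/2 := by linarith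
  rw [besselJ_eq hx, besselJ_eq hx, besselJ_eq hx, S_rec hν (-(x/2)^2)]
  have h1 : (x/2 : ℝ) ^ (ν+1) = (x/2)^ν * (x/2) := Real.rpow_add_one hx2.ne' ν
  have h2 : (x/2 : ℝ) ^ (ν-1) = (x/2)^ν / (x/2) := Real.rpow_sub_one hx2.ne' ν
  rw [h1, h2]
  field_simp
  ring

lemma gamma_half (n : ℕ) :
    Real.Gamma ((n:ℝ) + 1/2) = Real.sqrt π * (2*n).factorial / (4^n * n.factorial) := by
  induction n with
  | zero => simpa using Real.Gamma_one_half_eq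
  | succ n ih =>
    have harg : ((n+1:ℕ):ℝ) + 1/2 = ((n:ℝ) + 1/2) + 1 := by push_cast; ring
    have hpos : (0:ℝ) < (n:ℝ) + 1/2 := by positivity
    rw [harg, Real.Gamma_add_one hpos.ne', ih]
    have hf1 : ((2*(n+1)).factorial : ℝ) = (2*n+2) * ((2*n+1) * (2*n).factorial) := by
      have : 2*(n+1) = (2*n+1) + 1 := by ring
      rw [this, Nat.factorial_succ, Nat.factorial_succ]; push_cast; ring
    have hf2 : ((n+1).factorial : ℝ) = (n+1) * n.factorial := by
      rw [Nat.factorial_succ]; push_cast; ring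
    have h4 : (4:ℝ)^(n+1) = 4 * 4^n := by ring
    rw [hf1, hf2, h4]
    have hfn : (0:ℝ) < n.factorial := by positivity
    have h4n : (0:ℝ) < (4:ℝ)^n := by positivity
    field_simp
    ring

lemma S_neg_half {x : ℝ} :
    (∑' n : ℕ, bc (-(1:ℝ)/2) n * (-(x/2)^2) ^ n) = Real.cos x / Real.sqrt π := by
  have hπ : (0:ℝ) < Real.sqrt π := Real.sqrt_pos.2 Real.pi_pos
  have key : ∀ n : ℕ, bc (-(1:ℝ)/2) n * (-(x/2)^2) ^ n
      = (1 / Real.sqrt π) * ((-1)^n * x ^ (2*n) / (2*n).factorial) := by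
    intro n
    have harg : (n:ℝ) + (-(1:ℝ)/2) + 1 = (n:ℝ) + 1/2 := by ring
    rw [bc, harg, gamma_half n]
    have hfn : (0:ℝ) < n.factorial := by positivity
    have hf2n : (0:ℝ) < (2*n).factorial := by positivity
    have hx : (-(x/2)^2 : ℝ) ^ n = (-1)^n * (x^2)^n / 4^n := by
      rw [neg_pow ((x/2)^2) n, div_pow]
      ring_nf
      simp only [one_div]
      ring
    rw [hx, ← pow_mul]
    field_simp
  rw [tsum_congr key, tsum_mul_left, ← Real.cos_eq_tsum]
  ring

lemma S_half {x : ℝ} (hx : 0 < x) :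
    (∑' n : ℕ, bc ((1:ℝ)/2) n * (-(x/2)^2) ^ n) = 2 * Real.sin x / (Real.sqrt π * x) := by
  have hπ : (0:ℝ) < Real.sqrt π := Real.sqrt_pos.2 Real.pi_pos
  have key : ∀ n : ℕ, bc ((1:ℝ)/2) n * (-(x/2)^2) ^ n
      = (2 / (Real.sqrt π * x)) * ((-1)^n * x ^ (2*n+1) / (2*n+1).factorial) := by
    intro n
    have harg : (n:ℝ) + (1:ℝ)/2 + 1 = ((n+1:ℕ):ℝ) + 1/2 := by push_cast; ring
    rw [bc, harg, gamma_half (n+1)]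
    have hfn : (0:ℝ) < n.factorial := by positivity
    have hf1 : ((2*(n+1)).factorial : ℝ) = (2*n+2) * (2*n+1).factorial := by
      have : 2*(n+1) = (2*n+1) + 1 := by ring
      rw [this, Nat.factorial_succ]; push_cast; ring
    have hf2 : ((n+1).factorial : ℝ) = (n+1) * n.factorial := by
      rw [Nat.factorial_succ]; push_cast; ring
    have hf2n : (0:ℝ) < (2*n+1).factorial := by positivity
    have hxp : (-(x/2)^2 : ℝ) ^ n = (-1)^n * (x^2)^n / 4^n := by
      rw [neg_pow ((x/2)^2) n, div_pow]
      ring_nf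
      simp only [one_div]
      ring
    have hpow : (x:ℝ) ^ (2*n+1) = (x^2)^n * x := by rw [pow_succ, pow_mul]
    rw [hf1, hf2, hxp, hpow]
    have h4n : (0:ℝ) < (4:ℝ)^n := by positivity
    field_simp
    ring
  rw [tsum_congr key, tsum_mul_left, ← Real.sin_eq_tsum]
  ring

lemma besselJ_neg_half {x : ℝ} (hx : 0 < x) :
    besselJ (-(1:ℝ)/2) x = (x/2) ^ (-(1:ℝ)/2) * (Real.cos x / Real.sqrt π) := by
  rw [besselJ_eq hx, S_neg_half]

lemma besselJ_half {x : ℝ} (hx : 0 < x) :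
    besselJ ((1:ℝ)/2) x = (x/2) ^ ((1:ℝ)/2) * (2 * Real.sin x / (Real.sqrt π * x)) := by
  rw [besselJ_eq hx, S_half hx]

lemma one_le_sqrt_pi : (1:ℝ) ≤ Real.sqrt π := by
  rw [show (1:ℝ) = Real.sqrt 1 by simp]
  exact Real.sqrt_le_sqrt (by linarith [Real.pi_gt_three])

lemma besselJ_neg_half_bound {x : ℝ} (hx : 1 ≤ x) : |besselJ (-(1:ℝ)/2) x| ≤ 2 := by
  have hx0 : (0:ℝ) < x := by linarith
  rw [besselJ_neg_half hx0, abs_mul]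
  have h1 : |(x/2 : ℝ) ^ (-(1:ℝ)/2)| = (x/2) ^ (-(1:ℝ)/2) :=
    abs_of_pos (Real.rpow_pos_of_pos (by linarith) _)
  have h2 : ((1:ℝ)/2) ≤ (x/2) ^ ((1:ℝ)/2) := by
    calc ((1:ℝ)/2) = ((1:ℝ)/2) ^ (1:ℝ) := by rw [Real.rpow_one]
      _ ≤ ((1:ℝ)/2) ^ ((1:ℝ)/2) := by
          apply Real.rpow_le_rpow_of_exponent_ge (by norm_num) (by norm_num) (by norm_num)
      _ ≤ (x/2) ^ ((1:ℝ)/2) := by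
          apply Real.rpow_le_rpow (by norm_num) (by linarith) (by norm_num)
  have h3 : (x/2 : ℝ) ^ (-(1:ℝ)/2) ≤ 2 := by
    have heq : (x/2 : ℝ) ^ (-(1:ℝ)/2) = ((x/2) ^ ((1:ℝ)/2))⁻¹ := by
      rw [← Real.rpow_neg (by linarith)]; norm_num
    rw [heq]
    have hp : (0:ℝ) < (x/2) ^ ((1:ℝ)/2) := Real.rpow_pos_of_pos (by linarith) _
    rw [inv_le_comm₀ hp (by norm_num)]
    linarith
  have h4 : |Real.cos x / Real.sqrt π| ≤ 1 := by
    rw [abs_div, abs_of_pos (Real.sqrt_pos.2 Real.pi_pos)]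
    rw [div_le_one (Real.sqrt_pos.2 Real.pi_pos)]
    calc |Real.cos x| ≤ 1 := Real.abs_cos_le_one x
      _ ≤ Real.sqrt π := one_le_sqrt_pi
  calc |(x/2 : ℝ) ^ (-(1:ℝ)/2)| * |Real.cos x / Real.sqrt π|
      ≤ 2 * 1 := by
        rw [h1]
        exact mul_le_mul h3 h4 (abs_nonneg _) (by norm_num)
    _ = 2 := by norm_num

lemma besselJ_half_bound {x : ℝ} (hx : 1 ≤ x) : |besselJ ((1:ℝ)/2) x| ≤ 2 := by
  have hx0 : (0:ℝ) < x := by linarith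
  rw [besselJ_half hx0, abs_mul]
  have h1 : |(x/2 : ℝ) ^ ((1:ℝ)/2)| = (x/2) ^ ((1:ℝ)/2) :=
    abs_of_pos (Real.rpow_pos_of_pos (by linarith) _)
  have h2 : (x/2 : ℝ) ^ ((1:ℝ)/2) ≤ x := by
    calc (x/2 : ℝ) ^ ((1:ℝ)/2) ≤ x ^ ((1:ℝ)/2) :=
          Real.rpow_le_rpow (by linarith) (by linarith) (by norm_num)
      _ ≤ x ^ (1:ℝ) := Real.rpow_le_rpow_of_exponent_le hx (by norm_num)
      _ = x := Real.rpow_one x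
  have hπ : (1:ℝ) ≤ Real.sqrt π := one_le_sqrt_pi
  have h3 : |2 * Real.sin x / (Real.sqrt π * x)| ≤ 2 / x := by
    rw [abs_div, abs_mul, abs_mul, abs_of_pos (lt_of_lt_of_le one_pos hπ), abs_of_pos hx0]
    apply div_le_div₀ (by positivity) _ (by positivity) _
    · calc |(2:ℝ)| * |Real.sin x| ≤ 2 * 1 := by
            rw [abs_two]
            exact mul_le_mul_of_nonneg_left (Real.abs_sin_le_one x) (by norm_num)
        _ = 2 := by norm_num
    · nlinarith
  calc |(x/2 : ℝ) ^ ((1:ℝ)/2)| * |2 * Real.sin x / (Real.sqrt π * x)|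
      ≤ x * (2 / x) := by
        rw [h1]
        exact mul_le_mul h2 h3 (abs_nonneg _) hx0.le
    _ = 2 := by field_simp

lemma besselJ_bound (k : ℕ) :
    ∃ C : ℝ, 0 ≤ C ∧ ∀ x : ℝ, 1 ≤ x → |besselJ ((k:ℝ) - 1/2) x| ≤ C := by
  have main : ∀ k : ℕ,
      (∃ C : ℝ, 0 ≤ C ∧ ∀ x : ℝ, 1 ≤ x → |besselJ ((k:ℝ) - 1/2) x| ≤ C) ∧
      (∃ C : ℝ, 0 ≤ C ∧ ∀ x : ℝ, 1 ≤ x → |besselJ (((k+1:ℕ):ℝ) - 1/2) x| ≤ C) := by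
    intro k
    induction k with
    | zero =>
      constructor
      · refine ⟨2, by norm_num, fun x hx => ?_⟩
        have h : ((0:ℕ):ℝ) - 1/2 = -(1:ℝ)/2 := by norm_num
        rw [h]; exact besselJ_neg_half_bound hx
      · refine ⟨2, by norm_num, fun x hx => ?_⟩
        have h : ((0+1:ℕ):ℝ) - 1/2 = (1:ℝ)/2 := by norm_num
        rw [h]; exact besselJ_half_bound hx
    | succ k ih =>
      obtain ⟨⟨C1, hC1, hB1⟩, ⟨C2, hC2, hB2⟩⟩ := ih
      refine ⟨⟨C2, hC2, hB2⟩, ⟨2 * ((k:ℝ)+1/2) * C2 + C1, by positivity, fun x hx => ?_⟩⟩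
      have hx0 : (0:ℝ) < x := by linarith
      set ν : ℝ := ((k+1:ℕ):ℝ) - 1/2 with hνdef
      have hν : (1:ℝ)/2 ≤ ν := by
        rw [hνdef]; push_cast
        have : (0:ℝ) ≤ (k:ℝ) := Nat.cast_nonneg k
        linarith
      have e1 : ((k+1+1:ℕ):ℝ) - 1/2 = ν + 1 := by rw [hνdef]; push_cast; ring
      have e2 : ((k:ℕ):ℝ) - 1/2 = ν - 1 := by rw [hνdef]; push_cast; ring
      have eν : ν = (k:ℝ) + 1/2 := by rw [hνdef]; push_cast; ring
      rw [e1, besselJ_rec hν hx0]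
      calc |2*ν/x * besselJ ν x - besselJ (ν-1) x|
          ≤ |2*ν/x * besselJ ν x| + |besselJ (ν-1) x| := abs_sub _ _
        _ ≤ 2*((k:ℝ)+1/2) * C2 + C1 := by
            have hb2 := hB2 x hx
            have hb1 : |besselJ (ν-1) x| ≤ C1 := by rw [← e2]; exact hB1 x hx
            have hq : |2*ν/x| ≤ 2*((k:ℝ)+1/2) := by
              rw [abs_div, abs_of_pos hx0, abs_of_pos (by rw [eν]; positivity : (0:ℝ) < 2*ν)]
              rw [div_le_iff₀ hx0, eν]
              nlinarith [Nat.cast_nonneg (α := ℝ) k]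
            have h5 : |2*ν/x * besselJ ν x| ≤ 2*((k:ℝ)+1/2) * C2 := by
              rw [abs_mul]
              exact mul_le_mul hq hb2 (abs_nonneg _) (by positivity)
            linarith
  exact (main k).1


lemma S_abs_le {ν : ℝ} (hν : -(1:ℝ)/2 ≤ ν) {y : ℝ} (hy : |y| ≤ 1/4) :
    |∑' n : ℕ, bc ν n * y ^ n| ≤ 2 / Real.Gamma (ν+1) := by
  have hg1 : 0 < Real.Gamma (ν + 1) := Real.Gamma_pos_of_pos (by linarith)
  calc |∑' n : ℕ, bc ν n * y ^ n| ≤ ∑' n : ℕ, |bc ν n * y ^ n| := by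
        have h2 : Summable fun n : ℕ => ‖bc ν n * y ^ n‖ := by
          simpa only [Real.norm_eq_abs] using summable_bc_abs hν y
        have h3 := norm_tsum_le_tsum_norm (f := fun n : ℕ => bc ν n * y ^ n) h2
        simpa only [Real.norm_eq_abs] using h3
    _ ≤ ∑' n : ℕ, ((1:ℝ)/2) ^ n * (Real.Gamma (ν+1))⁻¹ := by
        refine Summable.tsum_le_tsum (fun n => ?_) (summable_bc_abs hν y)
          (summable_geometric_two.mul_right _)
        have hfac : (1:ℝ) ≤ n.factorial := by
          exact_mod_cast Nat.one_le_iff_ne_zero.2 n.factorial_ne_zero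
        calc |bc ν n * y ^ n| ≤ (2 * |y|) ^ n / n.factorial / Real.Gamma (ν+1) :=
              bc_term_le hν y n
          _ ≤ ((1:ℝ)/2) ^ n / 1 / Real.Gamma (ν+1) := by
              have h4 : (2 * |y|) ^ n ≤ ((1:ℝ)/2) ^ n :=
                pow_le_pow_left₀ (by positivity) (by linarith) n
              gcongr
          _ = ((1:ℝ)/2) ^ n * (Real.Gamma (ν+1))⁻¹ := by
              rw [div_one, div_eq_mul_inv]
    _ = 2 / Real.Gamma (ν+1) := by
        rw [tsum_mul_right, tsum_geometric_two, div_eq_mul_inv]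

lemma besselInt_nonneg (l : ℕ) {μ : ℝ} (hμ : 0 ≤ μ) : 0 ≤ besselInt l μ := by
  rw [besselInt]
  split_ifs with h1 h2
  · positivity
  · exact le_refl _
  · exact div_nonneg (sq_nonneg _) hμ

lemma besselInt_bound (l : ℕ) :
    ∃ B : ℝ, 0 ≤ B ∧ ∀ μ : ℝ, 0 ≤ μ → |besselInt l μ| ≤ B := by
  obtain ⟨C, hC0, hC⟩ := besselJ_bound (l+1)
  have harg : ((l+1:ℕ):ℝ) - 1/2 = (l:ℝ) + 1/2 := by push_cast; ring
  set ν : ℝ := (l:ℝ) + 1/2 with hν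
  have hl0 : (0:ℝ) ≤ (l:ℝ) := Nat.cast_nonneg l
  have hν2 : -(1:ℝ)/2 ≤ ν := by rw [hν]; linarith
  have hg1 : 0 < Real.Gamma (ν + 1) := Real.Gamma_pos_of_pos (by rw [hν]; linarith)
  set K : ℝ := 2 / Real.Gamma (ν+1) with hK
  have hK0 : 0 ≤ K := by positivity
  refine ⟨max (2/π) (max (C^2) (K^2)), le_max_of_le_left (by positivity), fun μ hμ => ?_⟩
  rcases eq_or_lt_of_le hμ with h0 | h0
  · rw [besselInt, if_pos h0.symm]
    split_ifs
    · refine le_max_of_le_left (le_of_eq (abs_of_pos (by positivity)))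
    · simp only [abs_zero]
      positivity
  rcases le_or_gt 1 μ with h1 | h1
  · -- large μ
    rw [besselInt, if_neg h0.ne']
    refine le_max_of_le_right (le_max_of_le_left ?_)
    have hb : |besselJ ν μ| ≤ C := by have h := hC μ h1; rwa [harg] at h
    calc |besselJ ν μ ^ 2 / μ| = |besselJ ν μ ^ 2| / μ := by rw [abs_div, abs_of_pos h0]
      _ ≤ |besselJ ν μ ^ 2| := div_le_self (abs_nonneg _) h1
      _ = |besselJ ν μ| ^ 2 := by rw [abs_of_nonneg (sq_nonneg _), sq_abs]
      _ ≤ C ^ 2 := by nlinarith [abs_nonneg (besselJ ν μ)]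
  · -- small μ
    rw [besselInt, if_neg h0.ne']
    refine le_max_of_le_right (le_max_of_le_right ?_)
    set S : ℝ := ∑' n : ℕ, bc ν n * (-(μ/2)^2) ^ n with hS
    have hJ : besselJ ν μ = (μ/2) ^ ν * S := besselJ_eq h0
    have hSle : |S| ≤ K := by
      rw [hS, hK]
      apply S_abs_le hν2
      rw [abs_neg, abs_of_nonneg (by positivity : (0:ℝ) ≤ (μ/2)^2)]
      nlinarith
    have hS2 : S ^ 2 ≤ K ^ 2 := by nlinarith [abs_nonneg S, sq_abs S]
    have hpow : ((μ/2 : ℝ) ^ ν) ^ 2 = (μ/2) ^ (2*l+1 : ℕ) := by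
      have e1 : ((μ/2 : ℝ) ^ ν) ^ (2:ℕ) = (μ/2) ^ (ν * ((2:ℕ):ℝ)) := by
        rw [Real.rpow_mul (by linarith : (0:ℝ) ≤ μ/2), Real.rpow_natCast]
      have e2 : ν * ((2:ℕ):ℝ) = ((2*l+1 : ℕ):ℝ) := by rw [hν]; push_cast; ring
      rw [e1, e2, Real.rpow_natCast]
    have hPμ : (μ/2 : ℝ) ^ (2*l+1 : ℕ) ≤ μ := by
      calc (μ/2 : ℝ) ^ (2*l+1 : ℕ) ≤ μ ^ (2*l+1 : ℕ) := by
            apply pow_le_pow_left₀ (by linarith) (by linarith)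
        _ ≤ μ ^ (1:ℕ) := pow_le_pow_of_le_one h0.le h1.le (by omega)
        _ = μ := pow_one μ
    have hP0 : (0:ℝ) ≤ (μ/2 : ℝ) ^ (2*l+1 : ℕ) := by positivity
    have habs : |besselJ ν μ ^ 2 / μ| = besselJ ν μ ^ 2 / μ := by
      apply abs_of_nonneg; positivity
    rw [habs, hJ, mul_pow, hpow, div_le_iff₀ h0]
    calc (μ/2 : ℝ) ^ (2*l+1 : ℕ) * S ^ 2 ≤ μ * K ^ 2 := by
          nlinarith [sq_nonneg S]
      _ = K ^ 2 * μ := by ring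

lemma summable_besselJ_all {ν : ℝ} (hν : 0 < ν) (x : ℝ) :
    Summable fun n : ℕ =>
      ((-1 : ℝ) ^ n / (n.factorial * Real.Gamma ((n : ℝ) + ν + 1))) *
        (x / 2) ^ (2 * (n : ℝ) + ν) := by
  have hν1 : -1 < ν := by linarith
  have hν2 : -(1:ℝ)/2 ≤ ν := by linarith
  rcases eq_or_ne x 0 with rfl | hx
  · apply summable_of_ne_finset_zero (s := ∅)
    intro n _
    have hexp : 2 * (n:ℝ) + ν ≠ 0 := by
      have : (0:ℝ) ≤ (n:ℝ) := Nat.cast_nonneg n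
      positivity
    simp [Real.zero_rpow hexp]
  · apply Summable.of_norm
    set r : ℝ := |x/2| with hr
    have hr0 : 0 < r := by
      rw [hr]; simp only [abs_pos]; intro h; exact hx (by linarith [div_eq_zero_iff.1 h])
    refine Summable.of_nonneg_of_le (fun n => norm_nonneg _) (fun n => ?_)
      (((Real.summable_pow_div_factorial (2 * r^2)).mul_left (r ^ ν / Real.Gamma (ν+1))))
    ·
      have hg := gamma_pos hν1 n
      have hfn : (0:ℝ) < n.factorial := by positivity
      rw [Real.norm_eq_abs, abs_mul]
      have h1 : |(-1 : ℝ) ^ n / (n.factorial * Real.Gamma ((n : ℝ) + ν + 1))| = bc ν n := by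
        rw [abs_div, abs_pow, abs_neg, abs_one, one_pow, bc,
          abs_of_pos (by positivity : (0:ℝ) < (n.factorial : ℝ) * Real.Gamma ((n:ℝ)+ν+1))]
      have h2 : |(x / 2) ^ (2 * (n : ℝ) + ν)| ≤ r ^ (2 * (n:ℝ) + ν) :=
        Real.abs_rpow_le_abs_rpow _ _
      have h3 : r ^ (2 * (n:ℝ) + ν) = (r^2) ^ n * r ^ ν := by
        rw [Real.rpow_add hr0]
        congr 1
        have h4 : (2 * (n:ℝ)) = ((2 * n : ℕ) : ℝ) := by push_cast; ring
        rw [h4, Real.rpow_natCast, pow_mul]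
      calc |(-1 : ℝ) ^ n / (n.factorial * Real.Gamma ((n : ℝ) + ν + 1))| *
            |(x / 2) ^ (2 * (n : ℝ) + ν)|
          ≤ bc ν n * ((r^2) ^ n * r ^ ν) := by
            rw [h1, ← h3]
            exact mul_le_mul_of_nonneg_left h2 (bc_pos hν1 n).le
        _ ≤ (2 ^ n / (n.factorial * Real.Gamma (ν + 1))) * ((r^2) ^ n * r ^ ν) := by
            apply mul_le_mul_of_nonneg_right (bc_le hν2 n) (by positivity)
        _ = (r ^ ν / Real.Gamma (ν+1)) * ((2 * r^2) ^ n / n.factorial) := by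
            rw [mul_pow]
            have hg1 : 0 < Real.Gamma (ν + 1) := Real.Gamma_pos_of_pos (by linarith)
            field_simp

lemma measurable_besselJ {ν : ℝ} (hν : 0 < ν) : Measurable (besselJ ν) := by
  apply measurable_of_tendsto_metrizable
    (f := fun N x => ∑ n ∈ Finset.range N,
      ((-1 : ℝ) ^ n / (n.factorial * Real.Gamma ((n : ℝ) + ν + 1))) *
        (x / 2) ^ (2 * (n : ℝ) + ν))
  · intro N
    apply Finset.measurable_sum
    intro n _
    exact (((measurable_id.div_const 2).pow measurable_const).const_mul _)
  · rw [tendsto_pi_nhds]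
    intro x
    exact (summable_besselJ_all hν x).hasSum.tendsto_sum_nat

lemma measurable_besselInt (l : ℕ) : Measurable (besselInt l) := by
  unfold besselInt
  have hν : (0:ℝ) < (l:ℝ) + 1/2 := by positivity
  exact Measurable.ite (measurableSet_singleton 0) measurable_const
    (((measurable_besselJ hν).pow_const 2).div measurable_id)

lemma measurable_Htilde (c D t : ℝ) : Measurable fun μ => Htilde c D μ t := by
  unfold Htilde Htilde1 Htilde2
  refine Measurable.ite measurableSet_Iio ?_ (Measurable.ite (measurableSet_singleton _)
    measurable_const ?_)
  · have m1 : Measurable fun μ : ℝ => Real.sqrt (c ^ 2 / (4 * D ^ 2) - μ ^ 2) :=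
      Real.continuous_sqrt.measurable.comp (measurable_const.sub (measurable_id.pow_const 2))
    exact ((Real.continuous_cosh.measurable.comp (m1.const_mul (c*t))).add
      ((measurable_const.div (m1.const_mul (2*D))).mul
        (Real.continuous_sinh.measurable.comp (m1.const_mul (c*t))))).const_mul _
  · have m1 : Measurable fun μ : ℝ => Real.sqrt (μ ^ 2 - c ^ 2 / (4 * D ^ 2)) :=
      Real.continuous_sqrt.measurable.comp ((measurable_id.pow_const 2).sub measurable_const)
    exact ((Real.continuous_cos.measurable.comp (m1.const_mul (c*t))).add
      ((measurable_const.div (m1.const_mul (2*D))).mul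
        (Real.continuous_sin.measurable.comp (m1.const_mul (c*t))))).const_mul _

end aux

/-- If `Σ (2l+1)·C_l < ∞` (where `C_l = C_l(0,0)`), then for all
`t, t' ≥ 0` the series `Σ (2l+1)·C_l(t,t')` converges absolutely and
`Σ (2l+1)·|C_l(t,t')| ≤ Σ (2l+1)·C_l`. -/
theorem angular_spectrum_sum_le
    (c D : ℝ) (hc : 0 < c) (hD : 0 < D)
    (G : MeasureTheory.Measure ℝ) [MeasureTheory.IsFiniteMeasure G]
    (hG0 : G (Set.Iio 0) = 0)
    (hsum : Summable fun l : ℕ => (2 * (l : ℝ) + 1) * Cl c D G l 0 0) :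
    ∀ t t' : ℝ, 0 ≤ t → 0 ≤ t' →
      (Summable fun l : ℕ => (2 * (l : ℝ) + 1) * |Cl c D G l t t'|) ∧
      ∑' l : ℕ, (2 * (l : ℝ) + 1) * |Cl c D G l t t'|
        ≤ ∑' l : ℕ, (2 * (l : ℝ) + 1) * Cl c D G l 0 0 := by
  intro t t' ht ht'
  have key : ∀ l : ℕ, |Cl c D G l t t'| ≤ Cl c D G l 0 0 := by
    intro l
    obtain ⟨B, hB0, hB⟩ := besselInt_bound l
    have hmI := measurable_besselInt l
    have hmt := measurable_Htilde c D t
    have hmt' := measurable_Htilde c D t'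
    have hintf : Integrable (besselInt l) (G.restrict (Ici 0)) := by
      refine Integrable.mono' (integrable_const B) hmI.aestronglyMeasurable ?_
      refine (ae_restrict_iff' measurableSet_Ici).2 (ae_of_all _ fun μ hμ => ?_)
      simpa only [Real.norm_eq_abs] using hB μ hμ
    have hintg : Integrable (fun μ => besselInt l μ * Htilde c D μ t * Htilde c D μ t')
        (G.restrict (Ici 0)) := by
      refine Integrable.mono' (integrable_const B)
        ((hmI.mul hmt).mul hmt').aestronglyMeasurable ?_
      refine (ae_restrict_iff' measurableSet_Ici).2 (ae_of_all _ fun μ hμ => ?_)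
      have h1 := abs_Htilde_le_one hc hD ht μ
      have h2 := abs_Htilde_le_one hc hD ht' μ
      have h3 := hB μ hμ
      rw [Real.norm_eq_abs, abs_mul, abs_mul]
      calc |besselInt l μ| * |Htilde c D μ t| * |Htilde c D μ t'|
          ≤ B * 1 * 1 := by
            apply mul_le_mul _ h2 (abs_nonneg _) (by positivity)
            exact mul_le_mul h3 h1 (abs_nonneg _) hB0
        _ = B := by ring
    have hle : ∀ᵐ μ ∂(G.restrict (Ici 0)),
        ‖besselInt l μ * Htilde c D μ t * Htilde c D μ t'‖ ≤ besselInt l μ := by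
      refine (ae_restrict_iff' measurableSet_Ici).2 (ae_of_all _ fun μ hμ => ?_)
      have h1 := abs_Htilde_le_one hc hD ht μ
      have h2 := abs_Htilde_le_one hc hD ht' μ
      have h0 := besselInt_nonneg l (mem_Ici.1 hμ)
      rw [Real.norm_eq_abs, abs_mul, abs_mul, abs_of_nonneg h0]
      calc besselInt l μ * |Htilde c D μ t| * |Htilde c D μ t'|
          ≤ besselInt l μ * 1 * 1 := by
            apply mul_le_mul _ h2 (abs_nonneg _) (by positivity)
            exact mul_le_mul_of_nonneg_left h1 h0
        _ = besselInt l μ := by ring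
    have hCl00 : Cl c D G l 0 0 = 2 * Real.pi ^ 2 * ∫ μ in Ici (0:ℝ), besselInt l μ ∂G := by
      unfold Cl
      congr 1
      apply integral_congr_ae (ae_of_all _ fun μ => ?_)
      rw [Htilde_zero, mul_one, mul_one]
    rw [hCl00]
    unfold Cl
    rw [abs_mul, abs_of_nonneg (by positivity : (0:ℝ) ≤ 2 * Real.pi ^ 2)]
    apply mul_le_mul_of_nonneg_left _ (by positivity)
    calc |∫ μ in Ici (0:ℝ), besselInt l μ * Htilde c D μ t * Htilde c D μ t' ∂G|
        ≤ ∫ μ in Ici (0:ℝ), ‖besselInt l μ * Htilde c D μ t * Htilde c D μ t'‖ ∂G := by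
          simpa only [Real.norm_eq_abs] using
            norm_integral_le_integral_norm
              (f := fun μ => besselInt l μ * Htilde c D μ t * Htilde c D μ t')
              (μ := G.restrict (Ici 0))
      _ ≤ ∫ μ in Ici (0:ℝ), besselInt l μ ∂G := integral_mono_ae hintg.norm hintf hle
  have hnn : ∀ l : ℕ, 0 ≤ Cl c D G l 0 0 := fun l => le_trans (abs_nonneg _) (key l)
  have hsummable : Summable fun l : ℕ => (2 * (l : ℝ) + 1) * |Cl c D G l t t'| := by
    refine Summable.of_nonneg_of_le (fun l => by positivity) (fun l => ?_) hsum
    exact mul_le_mul_of_nonneg_left (key l) (by positivity)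
  exact ⟨hsummable, Summable.tsum_le_tsum
    (fun l => mul_le_mul_of_nonneg_left (key l) (by positivity)) hsummable hsum⟩
end
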